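/- Let B be a real m-by-n₂ matrix with full column rank, β > 0 and μ ∈ (0,1). Let Q = [[βB^TB, -μB^T], [-B, (1/β)I_m]] and M = [[I, 0], [-μβB, 2μI_m]] as block matrices. Then M is invertible with M^{-1} = [[I, 0], [(1/2)βB, (1/(2μ))I_m]], and H := QM^{-1} = (1/2)[[(2-μ)βB^TB, -B^T], [-B, (1/(μβ))I_m]] is a symmetric positive definite matrix. -/

import Mathlib

open Matrix

/-- For the SC-PRSM matrices `Q = [[βBᵀB, -μBᵀ], [-B, (1/β)I]]` and
`M = [[I, 0], [-μβB, 2μI]]` with `B` of full column rank, `β > 0`, `μ ∈ (0,1)`: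
`M` is invertible with `M⁻¹ = [[I, 0], [(1/2)βB, (1/(2μ))I]]`, and
`H := QM⁻¹ = (1/2)[[(2-μ)βBᵀB, -Bᵀ], [-B, (1/(μβ))I]]` is symmetric positive
definite. -/
theorem stmt9 (n₂ m : ℕ) (B : Matrix (Fin m) (Fin n₂) ℝ)
    (hB : ∀ x : Fin n₂ → ℝ, B *ᵥ x = 0 → x = 0)
    (β μ : ℝ) (hβ : 0 < β) (hμ : μ ∈ Set.Ioo (0 : ℝ) 1)
    (Q M : Matrix (Fin n₂ ⊕ Fin m) (Fin n₂ ⊕ Fin m) ℝ)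
    (hQ : Q = Matrix.fromBlocks (β • (Bᵀ * B)) (-(μ • Bᵀ)) (-B) ((1 / β) • 1))
    (hM : M = Matrix.fromBlocks 1 0 (-((μ * β) • B)) ((2 * μ) • 1)) :
    (IsUnit M ∧ M⁻¹ = Matrix.fromBlocks 1 0 (((1 / 2) * β) • B) ((1 / (2 * μ)) • 1))
    ∧ Q * M⁻¹
        = (1 / 2 : ℝ) •
            Matrix.fromBlocks (((2 - μ) * β) • (Bᵀ * B)) (-Bᵀ) (-B) ((1 / (μ * β)) • 1)
    ∧ (Q * M⁻¹)ᵀ = Q * M⁻¹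
    ∧ ∀ x : Fin n₂ ⊕ Fin m → ℝ, x ≠ 0 → 0 < x ⬝ᵥ ((Q * M⁻¹) *ᵥ x) := by
  obtain ⟨hμ0, hμ1⟩ := hμ
  have hμne : μ ≠ 0 := ne_of_gt hμ0
  have hβne : β ≠ 0 := ne_of_gt hβ
  set M' : Matrix (Fin n₂ ⊕ Fin m) (Fin n₂ ⊕ Fin m) ℝ :=
    Matrix.fromBlocks 1 0 (((1 / 2) * β) • B) ((1 / (2 * μ)) • 1) with hM'
  have hMM' : M * M' = 1 := by
    rw [hM, hM', Matrix.fromBlocks_multiply, ← Matrix.fromBlocks_one]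
    rw [Matrix.fromBlocks_inj]
    constructor
    · simp
    constructor
    · simp
    constructor
    · simp [Matrix.smul_mul, Matrix.mul_smul, smul_smul]
      rw [show (2⁻¹ * β * (2 * μ)) = μ * β by ring, neg_add_cancel]
    · simp [Matrix.smul_mul, Matrix.mul_smul, smul_smul]
      rw [show μ⁻¹ * 2⁻¹ * (2 * μ) = 1 by field_simp, one_smul]
  have hUnit : IsUnit M := by
    have := invertibleOfRightInverse _ _ hMM'
    exact isUnit_of_invertible M
  have hMinv : M⁻¹ = M' := Matrix.inv_eq_right_inv hMM'
  have hH : Q * M⁻¹ = (1 / 2 : ℝ) •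
      Matrix.fromBlocks (((2 - μ) * β) • (Bᵀ * B)) (-Bᵀ) (-B) ((1 / (μ * β)) • 1) := by
    rw [hMinv, hQ, hM', Matrix.fromBlocks_multiply, Matrix.fromBlocks_smul,
      Matrix.fromBlocks_inj]
    refine ⟨?_, ?_, ?_, ?_⟩
    · simp [Matrix.mul_smul, Matrix.smul_mul, smul_smul, Matrix.mul_assoc]
      module
    · simp [Matrix.mul_smul, Matrix.smul_mul, smul_smul]
      rw [show μ⁻¹ * 2⁻¹ * μ = (2⁻¹ : ℝ) by field_simp]
    · simp [Matrix.mul_smul, Matrix.smul_mul, smul_smul]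
      rw [show 2⁻¹ * β * β⁻¹ = (2⁻¹ : ℝ) by field_simp]
      module
    · simp [Matrix.mul_smul, Matrix.smul_mul, smul_smul]
      congr 1
      ring
  refine ⟨⟨hUnit, hMinv⟩, hH, ?_, ?_⟩
  · rw [hH]
    simp [Matrix.fromBlocks_transpose, Matrix.transpose_smul, Matrix.transpose_neg,
      Matrix.transpose_mul, Matrix.transpose_one]
  · intro x hx
    have hx' : x = Sum.elim (x ∘ Sum.inl) (x ∘ Sum.inr) := by
      funext i; cases i <;> rfl
    set u := x ∘ Sum.inl with hu
    set v := x ∘ Sum.inr with hv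
    rw [hH, hx']
    rw [Matrix.smul_mulVec, Matrix.fromBlocks_mulVec]
    simp only [Sum.elim_comp_inl, Sum.elim_comp_inr]
    rw [dotProduct_smul, sumElim_dotProduct_sumElim]
    simp only [dotProduct_add, Matrix.smul_mulVec, dotProduct_smul,
      Matrix.neg_mulVec, dotProduct_neg, Matrix.one_mulVec,
      ← Matrix.mulVec_mulVec, dotProduct_mulVec, Matrix.vecMul_transpose]
    rw [← dotProduct_mulVec, ← dotProduct_mulVec]
    set w := B *ᵥ u with hw
    have dotnn : ∀ (k : ℕ) (z : Fin k → ℝ), 0 ≤ z ⬝ᵥ z := fun k z =>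
      Finset.sum_nonneg fun i _ => mul_self_nonneg _
    have dotpos : ∀ (k : ℕ) (z : Fin k → ℝ), z ≠ 0 → 0 < z ⬝ᵥ z := by
      intro k z hz
      rcases lt_or_eq_of_le (dotnn k z) with h | h
      · exact h
      · exact absurd (dotProduct_self_eq_zero.mp h.symm) hz
    have hWnn : 0 ≤ w ⬝ᵥ w := dotnn _ _
    have hVnn : 0 ≤ v ⬝ᵥ v := dotnn _ _
    have hkey : 0 ≤ (β • w - v) ⬝ᵥ (β • w - v) := dotnn _ _
    have hkey' : β * β * (w ⬝ᵥ w) - 2 * β * (w ⬝ᵥ v) + v ⬝ᵥ v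
        = (β • w - v) ⬝ᵥ (β • w - v) := by
      simp [sub_dotProduct, dotProduct_sub, smul_dotProduct,
        dotProduct_smul, dotProduct_comm v w, smul_eq_mul]
      ring
    have hcomm : v ⬝ᵥ w = w ⬝ᵥ v := dotProduct_comm v w
    have hstrict : 0 < (1 - μ) * β * (w ⬝ᵥ w) + ((1 - μ) / (μ * β)) * (v ⬝ᵥ v) := by
      have h1μ : 0 < 1 - μ := by linarith
      have hμβ : 0 < μ * β := mul_pos hμ0 hβ
      by_cases huz : u = 0
      · have hvz : v ≠ 0 := by
          intro hv0
          apply hx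
          rw [hx', huz, hv0]
          funext i; cases i <;> rfl
        have : 0 < v ⬝ᵥ v := dotpos _ _ hvz
        have h2 : 0 < ((1 - μ) / (μ * β)) * (v ⬝ᵥ v) :=
          mul_pos (div_pos h1μ hμβ) this
        nlinarith [mul_nonneg (le_of_lt h1μ) (mul_nonneg hβ.le hWnn)]
      · have hwz : w ≠ 0 := fun h0 => huz (hB u h0)
        have : 0 < w ⬝ᵥ w := dotpos _ _ hwz
        have h2 : 0 < (1 - μ) * β * (w ⬝ᵥ w) :=
          mul_pos (mul_pos h1μ hβ) this
        have h3 : 0 ≤ ((1 - μ) / (μ * β)) * (v ⬝ᵥ v) :=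
          mul_nonneg (div_nonneg h1μ.le hμβ.le) hVnn
        linarith
    have hineq : 0 ≤ β * β * (w ⬝ᵥ w) - 2 * β * (w ⬝ᵥ v) + v ⬝ᵥ v := by
      rw [hkey']; exact hkey
    have hid : ((1 : ℝ) / 2) • (((2 - μ) * β) • (w ⬝ᵥ w) + -(w ⬝ᵥ v)
          + (-(v ⬝ᵥ w) + (1 / (μ * β)) • (v ⬝ᵥ v)))
        = (1 / (2 * β)) * (β * β * (w ⬝ᵥ w) - 2 * β * (w ⬝ᵥ v) + v ⬝ᵥ v)
          + (1 / 2) * ((1 - μ) * β * (w ⬝ᵥ w) + ((1 - μ) / (μ * β)) * (v ⬝ᵥ v)) := by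
      rw [hcomm]
      simp only [smul_eq_mul]
      field_simp
      ring
    rw [hid]
    have h4 : 0 ≤ (1 / (2 * β)) * (β * β * (w ⬝ᵥ w) - 2 * β * (w ⬝ᵥ v) + v ⬝ᵥ v) :=
      mul_nonneg (by positivity) hineq
    linarith
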